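/- Let P_x be a symmetric real (N_x+1)×(N_x+1) matrix and let Q_t be a real (N_t+1)×(N_t+1) matrix with Q_t + Q_tᵀ = e_n e_nᵀ − e_s e_sᵀ, where e_s = (1,0,…,0)ᵀ and e_n = (0,…,0,1)ᵀ in ℝ^{N_t+1}. Define R_s = e_sᵀ ⊗ I_{N_x+1} and R_n = e_nᵀ ⊗ I_{N_x+1}. Then for every u ∈ ℝ^{(N_t+1)(N_x+1)}: uᵀ (Q_t ⊗ P_x) u = ½ (R_n u)ᵀ P_x (R_n u) − ½ (R_s u)ᵀ P_x (R_s u). -/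

import Mathlib

open Matrix Kronecker

lemma aux_face {Nx Nt : ℕ} (Px : Matrix (Fin (Nx+1)) (Fin (Nx+1)) ℝ)
    (l : Fin (Nt+1)) (u : Fin (Nt+1) × Fin (Nx+1) → ℝ) :
    u ⬝ᵥ ((Matrix.single l l (1:ℝ)) ⊗ₖ Px).mulVec u
      = (fun i => u (l, i)) ⬝ᵥ Px.mulVec (fun i => u (l, i)) := by
  simp only [dotProduct, mulVec, Matrix.kroneckerMap_apply, Matrix.single,
    Matrix.of_apply, Fintype.sum_prod_type]
  rw [Finset.sum_eq_single l]
  · congr 1; ext i; congr 1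
    rw [Finset.sum_eq_single l]
    · simp
    · intro b _ hb; simp [hb.symm]
    · simp
  · intro b _ hb
    simp [Ne.symm hb]
  · simp

lemma aux_Rmul {Nx Nt : ℕ} (l : Fin (Nt+1)) (u : Fin (Nt+1) × Fin (Nx+1) → ℝ) :
    (Matrix.of fun i (pp : Fin (Nt+1) × Fin (Nx+1)) =>
      if pp.1 = l ∧ pp.2 = i then (1 : ℝ) else 0).mulVec u = fun i => u (l, i) := by
  ext i
  simp only [mulVec, dotProduct, Matrix.of_apply, Fintype.sum_prod_type]
  rw [Finset.sum_eq_single l]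
  · simp
  · intro b _ hb; simp [hb]
  · simp

theorem stmt_7 (Nx Nt : ℕ)
    (Px : Matrix (Fin (Nx + 1)) (Fin (Nx + 1)) ℝ) (hPx : Px.IsSymm)
    (Qt : Matrix (Fin (Nt + 1)) (Fin (Nt + 1)) ℝ)
    (hQt : Qt + Qtᵀ =
      Matrix.single (Fin.last Nt) (Fin.last Nt) (1 : ℝ)
        - Matrix.single 0 0 (1 : ℝ))
    (Rs Rn : Matrix (Fin (Nx + 1)) (Fin (Nt + 1) × Fin (Nx + 1)) ℝ)
    (hRs : Rs = Matrix.of fun i pp => if pp.1 = 0 ∧ pp.2 = i then (1 : ℝ) else 0)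
    (hRn : Rn = Matrix.of fun i pp => if pp.1 = Fin.last Nt ∧ pp.2 = i then (1 : ℝ) else 0) :
    ∀ u : Fin (Nt + 1) × Fin (Nx + 1) → ℝ,
      u ⬝ᵥ (Qt ⊗ₖ Px).mulVec u
        = (1 / 2) * (Rn.mulVec u ⬝ᵥ Px.mulVec (Rn.mulVec u))
          - (1 / 2) * (Rs.mulVec u ⬝ᵥ Px.mulVec (Rs.mulVec u)) := by
  intro u
  have hsym : u ⬝ᵥ (Qt ⊗ₖ Px).mulVec u = u ⬝ᵥ (Qtᵀ ⊗ₖ Px).mulVec u := by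
    rw [dotProduct_mulVec, ← Matrix.mulVec_transpose, dotProduct_comm,
      ← Matrix.kroneckerMap_transpose, hPx.eq]
  have h2 : (2:ℝ) * (u ⬝ᵥ (Qt ⊗ₖ Px).mulVec u)
      = u ⬝ᵥ ((Qt + Qtᵀ) ⊗ₖ Px).mulVec u := by
    rw [Matrix.add_kronecker, Matrix.add_mulVec, dotProduct_add, ← hsym]; ring
  have h3 : u ⬝ᵥ ((Qt + Qtᵀ) ⊗ₖ Px).mulVec u
      = (fun i => u (Fin.last Nt, i)) ⬝ᵥ Px.mulVec (fun i => u (Fin.last Nt, i))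
        - (fun i => u ((0 : Fin (Nt+1)), i)) ⬝ᵥ Px.mulVec (fun i => u (0, i)) := by
    have hsub : ∀ A B : Matrix (Fin (Nt+1)) (Fin (Nt+1)) ℝ,
        (A - B) ⊗ₖ Px = A ⊗ₖ Px - B ⊗ₖ Px := by
      intro A B; ext ⟨t, i⟩ ⟨s, j⟩
      simp [Matrix.kroneckerMap_apply, sub_mul]
    rw [hQt, hsub, Matrix.sub_mulVec, dotProduct_sub,
      aux_face, aux_face]
  rw [hRn, hRs, aux_Rmul, aux_Rmul]
  linarith [h2, h3]
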